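/- (Positive topological entropy) Let f : ℝ × ℝ → ℝ be continuous and 1-periodic in the time variable, and suppose the equation x' = f(t,x) admits a solution x with x(t+2) = x(t) for all t ∈ ℝ and x(t₁+1) ≠ x(t₁) for some t₁ ∈ ℝ. Then there exists a compact subset W of C(ℝ,ℝ), consisting of solutions of x' = f(t,x) and invariant under the time-one shift ψ₁, such that the topological entropy of the restriction ψ₁|_W : W → W equals log 2. -/

import Mathlib

/-- `x` is a (classical) solution of the ODE `x' = f(t,x)` on the whole real line. -/
def IsSolution (f : ℝ × ℝ → ℝ) (x : ℝ → ℝ) : Prop :=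
  ∀ t : ℝ, HasDerivAt x (f (t, x t)) t

/-- The time-one shift `ψ₁` on `C(ℝ, ℝ)`: `shiftOne w = w (· + 1)`. -/
def shiftOne (w : C(ℝ, ℝ)) : C(ℝ, ℝ) :=
  w.comp ⟨fun t => t + 1, by continuity⟩


open Dynamics Filter Set Uniformity UniformSpace Topology
open scoped SetRel

abbrev SA := ℤ → Bool

def Tt : SA → SA := fun a n => !(a (n+1))

def Vent (N : ℕ) : Set (SA × SA) := {p | ∀ m : ℤ, |m| ≤ (N : ℤ) → p.1 m = p.2 m}

lemma Vent_symm (N : ℕ) : SetRel.IsSymm (Vent N) :=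
  ⟨fun _ _ h m hm => (h m hm).symm⟩

lemma Vent_comp (N : ℕ) : Vent N ○ Vent N ⊆ Vent N := by
  rintro ⟨a, b⟩ ⟨c, hac, hcb⟩ m hm
  exact (hac m hm).trans (hcb m hm)

lemma uniformity_bool : 𝓤 Bool = Filter.principal SetRel.id := rfl

lemma Vent_mem (N : ℕ) : Vent N ∈ 𝓤 SA := by
  have : Vent N = ⋂ m ∈ Finset.Icc (-(N:ℤ)) N, {p : SA × SA | p.1 m = p.2 m} := by
    ext p
    simp only [Set.mem_iInter, Finset.mem_Icc, Vent, Set.mem_setOf_eq]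
    exact ⟨fun h m hm => h m (abs_le.2 hm), fun h m hm => h m (abs_le.1 hm)⟩
  rw [this]
  refine (Filter.biInter_finset_mem _).2 fun m _ => ?_
  rw [Pi.uniformity]
  refine mem_iInf_of_mem m ?_
  rw [Filter.mem_comap]
  exact ⟨SetRel.id, by rw [uniformity_bool]; exact Filter.mem_principal_self _,
    fun p hp => hp⟩

lemma hasBasis_SA : (𝓤 SA).HasBasis (fun _ : ℕ => True) Vent := by
  constructor
  intro U
  constructor
  · intro hU
    rw [Pi.uniformity, Filter.mem_iInf] at hU
    obtain ⟨I, hIfin, Vs, hVs, rfl⟩ := hU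
    obtain ⟨N, hN⟩ : ∃ N : ℕ, ∀ i ∈ I, |i| ≤ (N:ℤ) := by
      obtain ⟨N, hN⟩ := (hIfin.image Int.natAbs).bddAbove
      refine ⟨N, fun i hi => ?_⟩
      have := hN (Set.mem_image_of_mem Int.natAbs hi)
      rw [Int.abs_eq_natAbs]; omega
    refine ⟨N, trivial, fun p hp => ?_⟩
    rw [Set.mem_iInter]
    rintro ⟨i, hi⟩
    obtain ⟨t, ht, hsub⟩ := Filter.mem_comap.1 (hVs ⟨i, hi⟩)
    apply hsub
    rw [uniformity_bool, Filter.mem_principal] at ht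
    exact ht (hp i (hN i hi))
  · rintro ⟨N, -, hsub⟩
    exact Filter.mem_of_superset (Vent_mem N) hsub

lemma Tt_iter (k : ℕ) : ∀ (a b : SA) (n : ℤ),
    ((Tt^[k] a) n = (Tt^[k] b) n ↔ a (n + k) = b (n + k)) := by
  induction k with
  | zero => intro a b n; simp
  | succ k ih =>
    intro a b n
    rw [Function.iterate_succ_apply, Function.iterate_succ_apply]
    rw [ih (Tt a) (Tt b) n]
    show (!(a (n + k + 1))) = (!(b (n + k + 1))) ↔ _
    rw [Bool.not_inj_iff]
    constructor
    · intro h; convert h using 2 <;> push_cast <;> ring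
    · intro h; convert h using 2 <;> push_cast <;> ring

lemma mem_dynE {N n : ℕ} (hn : 1 ≤ n) {a b : SA} :
    (a, b) ∈ dynEntourage Tt (Vent N) n ↔
      ∀ j ∈ Finset.Icc (-(N:ℤ)) ((N:ℤ) + n - 1), a j = b j := by
  rw [mem_dynEntourage]
  constructor
  · intro h j hj
    rw [Finset.mem_Icc] at hj
    by_cases hc : j ≤ (N:ℤ)
    · have := (Tt_iter 0 a b j).1 ((h 0 (by omega)) j (by rw [abs_le]; omega))
      simpa using this
    · set k : ℕ := (j - N).toNat with hk
      have hk1 : (k : ℤ) = j - N := by omega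
      have hk2 : k < n := by omega
      have := (Tt_iter k a b (j - k)).1 ((h k hk2) (j - k) (by rw [hk1]; simp))
      simpa using this
  · intro h k hk m hm
    rw [Tt_iter k a b m]
    exact h (m + k) (by rw [Finset.mem_Icc]; rw [abs_le] at hm; omega)

noncomputable def extSA (J : Finset ℤ) (g : J → Bool) : SA :=
  fun m => if h : m ∈ J then g ⟨m, h⟩ else false

lemma coverMincard_upper (N n : ℕ) (hn : 1 ≤ n) :
    coverMincard Tt Set.univ (Vent N) n ≤ (2 ^ (2 * N + n) : ℕ) := by
  classical
  set J : Finset ℤ := Finset.Icc (-(N:ℤ)) ((N:ℤ) + n - 1) with hJ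
  set s : Finset SA := Finset.image (extSA J) Finset.univ with hs
  have hcover : IsDynCoverOf Tt Set.univ (Vent N) n s := by
    intro b _
    refine ⟨extSA J (fun j => b j), ?_, ?_⟩
    · exact Finset.mem_coe.2 (Finset.mem_image.2 ⟨_, Finset.mem_univ _, rfl⟩)
    · rw [mem_dynE hn]
      intro j hj
      simp [extSA, show j ∈ J from hj]
  refine (hcover.coverMincard_le_card).trans ?_
  have hcard : s.card ≤ 2 ^ (2 * N + n) := by
    refine Finset.card_image_le.trans ?_
    rw [Finset.card_univ, Fintype.card_fun]
    have : J.card = 2 * N + n := by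
      rw [hJ, Int.card_Icc]; omega
    simp [this, Fintype.card_bool]
  exact_mod_cast hcard

lemma coverMincard_lower (N n : ℕ) (hn : 1 ≤ n) :
    (2 ^ n : ℕ) ≤ coverMincard Tt Set.univ (Vent N) n := by
  classical
  set J : Finset ℤ := Finset.Icc (0:ℤ) ((n:ℤ) - 1) with hJ
  refine le_iInf₂ fun s hs => ?_
  have hinj : ∀ g : J → Bool, ∃ c ∈ s, (c, extSA J g) ∈ dynEntourage Tt (Vent N) n := by
    intro g
    have := hs (Set.mem_univ (extSA J g))
    obtain ⟨c, hc, hb⟩ := this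
    exact ⟨c, hc, (mem_dynE hn).2 fun j hj => ((mem_dynE hn).1 hb j hj).symm⟩
  choose c hc hcb using hinj
  have hinj2 : Function.Injective c := by
    intro g g' hgg'
    funext j
    have hj2 : (0:ℤ) ≤ (j:ℤ) ∧ (j:ℤ) ≤ (n:ℤ) - 1 := Finset.mem_Icc.1 j.2
    have h1 := (mem_dynE hn).1 (hcb g) j (by rw [Finset.mem_Icc]; omega)
    have h2 := (mem_dynE hn).1 (hgg' ▸ hcb g') j (by rw [Finset.mem_Icc]; omega)
    have e1 : extSA J g j = g j := by simp [extSA, j.2]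
    have e2 : extSA J g' j = g' j := by simp [extSA, j.2]
    rw [e1] at h1; rw [e2] at h2; rw [← h1, ← h2]
  have hcard : 2 ^ n ≤ s.card := by
    have := Fintype.card_le_of_injective (fun g : J → Bool => (⟨c g, hc g⟩ : s)) (by
      intro g g' h; exact hinj2 (by simpa using congrArg Subtype.val h))
    rw [Fintype.card_fun, Fintype.card_coe, Fintype.card_bool] at this
    have hJcard : J.card = n := by rw [hJ, Int.card_Icc]; omega
    rw [hJcard] at this
    simpa using this
  exact_mod_cast hcard

lemma ENNReal_log_two : ENNReal.log 2 = (Real.log 2 : EReal) := by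
  rw [← ENNReal.ofReal_ofNat, ENNReal.log_ofReal_of_pos (by norm_num)]

lemma Vent_comp_eq (N : ℕ) : Vent N ○ Vent N = Vent N :=
  le_antisymm (Vent_comp N) (subset_comp_self_of_mem_uniformity (Vent_mem N))

lemma EReal_natCast_ne_bot (n : ℕ) : (n : EReal) ≠ ⊥ := by
  exact_mod_cast EReal.natCast_ne_bot n

lemma nlogn (L : EReal) {n : ℕ} (hn : 1 ≤ n) : (n : EReal) * L / (n : EReal) = L := by
  rw [← EReal.mul_div, EReal.mul_div_cancel (EReal.natCast_ne_bot n) (EReal.natCast_ne_top n)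
    (by exact_mod_cast Nat.one_le_iff_ne_zero.1 hn)]

lemma log_two_le_entE (N : ℕ) :
    (Real.log 2 : EReal) ≤ coverEntropyEntourage Tt Set.univ (Vent N) := by
  refine Filter.le_limsup_of_frequently_le (Filter.Eventually.frequently ?_) (by isBoundedDefault)
  rw [eventually_atTop]
  refine ⟨1, fun n hn => ?_⟩
  have h1 : ((2 ^ n : ℕ) : ℕ∞) ≤ coverMincard Tt Set.univ (Vent N) n :=
    coverMincard_lower N n hn
  have h2 : ((n : EReal) * (Real.log 2 : EReal)) / (n : EReal)
      ≤ ENNReal.log (coverMincard Tt Set.univ (Vent N) n) / (n : EReal) := by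
    apply EReal.div_le_div_right_of_nonneg (by exact_mod_cast Nat.zero_le n)
    have : ENNReal.log (((2 ^ n : ℕ) : ℕ∞) : ENNReal) = (n : EReal) * (Real.log 2 : EReal) := by
      push_cast
      rw [ENNReal.log_pow, ENNReal_log_two]
    rw [← this]
    exact ENNReal.log_monotone (ENat.toENNReal_le.2 h1)
  exact le_trans (le_of_eq (nlogn _ hn).symm) h2

lemma entE_le_log_two (N : ℕ) :
    coverEntropyEntourage Tt Set.univ (Vent N) ≤ (Real.log 2 : EReal) := by
  have key : ∀ n : ℕ, 1 ≤ n → coverEntropyEntourage Tt Set.univ (Vent N)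
      ≤ ((((2 * N + n : ℕ) : ℝ) * Real.log 2 / (n : ℝ) : ℝ) : EReal) := by
    intro n hn
    have h0 : coverEntropyEntourage Tt Set.univ (Vent N)
        ≤ ENNReal.log (coverMincard Tt Set.univ (Vent N) n) / (n : EReal) := by
      haveI := Vent_symm N
      have := coverEntropyEntourage_le_log_coverMincard_div (T := Tt) (F := Set.univ)
        (U := Vent N) (Set.mapsTo_univ Tt Set.univ) (by omega : n ≠ 0)
      rwa [Vent_comp_eq] at this
    refine h0.trans ?_
    have h1 : ENNReal.log (coverMincard Tt Set.univ (Vent N) n)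
        ≤ (((2 * N + n : ℕ) : ℝ) : EReal) * (Real.log 2 : EReal) := by
      have h2 : ENNReal.log (((2 ^ (2 * N + n) : ℕ) : ℕ∞) : ENNReal)
          = (((2 * N + n : ℕ) : ℝ) : EReal) * (Real.log 2 : EReal) := by
        push_cast
        rw [ENNReal.log_pow, ENNReal_log_two]
        norm_cast
      rw [← h2]
      exact ENNReal.log_monotone (ENat.toENNReal_le.2 (coverMincard_upper N n hn))
    calc ENNReal.log (coverMincard Tt Set.univ (Vent N) n) / (n : EReal)
        ≤ ((((2 * N + n : ℕ) : ℝ) : EReal) * (Real.log 2 : EReal)) / (n : EReal) :=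
          EReal.div_le_div_right_of_nonneg (by exact_mod_cast Nat.zero_le n) h1
      _ = _ := by norm_cast
  have htend : Tendsto (fun n : ℕ => ((((2 * N + n : ℕ) : ℝ) * Real.log 2 / (n : ℝ) : ℝ) : EReal))
      atTop (𝓝 ((Real.log 2 : ℝ) : EReal)) := by
    rw [EReal.tendsto_coe]
    have base : Tendsto (fun n : ℕ => (2 * N : ℝ) * Real.log 2 / n + Real.log 2) atTop
        (𝓝 (0 + Real.log 2)) :=
      (tendsto_const_div_atTop_nhds_zero_nat _).add tendsto_const_nhds
    rw [zero_add] at base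
    refine base.congr' ?_
    filter_upwards [eventually_ge_atTop 1] with n hn
    have hne : (n : ℝ) ≠ 0 := by positivity
    push_cast
    field_simp
  exact ge_of_tendsto htend (eventually_atTop.2 ⟨1, key⟩)

lemma coverEntropy_Tt : coverEntropy Tt (Set.univ : Set SA) = (Real.log 2 : EReal) := by
  rw [coverEntropy_eq_iSup_basis hasBasis_SA]
  apply le_antisymm
  · exact iSup₂_le fun N _ => entE_le_log_two N
  · exact le_iSup₂_of_le 0 trivial (log_two_le_entE 0)


open Filter Set Topology

section ODE
variable {f : ℝ × ℝ → ℝ} {x : ℝ → ℝ}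

lemma IsSolution.continuous (hx : IsSolution f x) : Continuous x :=
  continuous_iff_continuousAt.2 fun t => (hx t).differentiableAt.continuousAt

lemma shift_isSolution (hper : ∀ t x : ℝ, f (t + 1, x) = f (t, x)) (hx : IsSolution f x) :
    IsSolution f (fun t => x (t + 1)) := by
  intro t
  have h := (hx (t + 1)).comp_add_const t 1
  rwa [hper] at h

lemma periodic_aux (hx2 : ∀ t : ℝ, x (t + 2) = x t) (s : ℝ) :
    ∀ n : ℤ, (x (s + n + 1) = x (s + n) ↔ x (s + 1) = x s) := by
  intro n
  induction n using Int.induction_on with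
  | zero => norm_num
  | succ n ih =>
    push_cast at ih ⊢
    rw [show s + ((n:ℝ) + 1) + 1 = (s + n) + 2 by ring, show s + ((n:ℝ) + 1) = s + n + 1 by ring,
      hx2 (s + n), eq_comm]
    exact ih
  | pred n ih =>
    push_cast at ih ⊢
    have h : x (s + (-(n:ℝ) - 1)) = x (s + -(n:ℝ) + 1) := by
      rw [show s + -(n:ℝ) + 1 = (s + (-(n:ℝ) - 1)) + 2 by ring, hx2]
    rw [show s + (-(n:ℝ) - 1) + 1 = s + -(n:ℝ) by ring, h, eq_comm]
    exact ih

lemma exists_joint (hxc : Continuous x) (hx2 : ∀ t : ℝ, x (t + 2) = x t)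
    (t₁ : ℝ) (ht₁ : x (t₁ + 1) ≠ x t₁) : ∃ t₀ : ℝ, x (t₀ + 1) = x t₀ := by
  set g : ℝ → ℝ := fun t => x (t + 1) - x t with hg
  have hgc : Continuous g := (hxc.comp (continuous_add_right 1)).sub hxc
  have hg1 : g (t₁ + 1) = - g t₁ := by
    simp only [hg]
    rw [show t₁ + 1 + 1 = t₁ + 2 by ring, hx2]
    ring
  have hgne : g t₁ ≠ 0 := sub_ne_zero.2 ht₁
  rcases lt_or_gt_of_ne hgne with h | h
  · have h0 : (0:ℝ) ∈ Set.Icc (g t₁) (g (t₁ + 1)) := by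
      rw [hg1]; constructor <;> linarith
    obtain ⟨t₀, -, ht₀⟩ := intermediate_value_Icc (by linarith : t₁ ≤ t₁ + 1)
      hgc.continuousOn h0
    exact ⟨t₀, sub_eq_zero.1 ht₀⟩
  · have h0 : (0:ℝ) ∈ Set.Icc (g (t₁ + 1)) (g t₁) := by
      rw [hg1]; constructor <;> linarith
    obtain ⟨t₀, -, ht₀⟩ := intermediate_value_Icc' (by linarith : t₁ ≤ t₁ + 1)
      hgc.continuousOn h0
    exact ⟨t₀, sub_eq_zero.1 ht₀⟩

variable {t₀ : ℝ}

/-- The glued function. -/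
noncomputable def wfglue (x : ℝ → ℝ) (t₀ : ℝ) (a : ℤ → Bool) (t : ℝ) : ℝ :=
  if a ⌊t - t₀⌋ then x (t + 1) else x t

lemma wf_isSolution (hper : ∀ t x : ℝ, f (t + 1, x) = f (t, x)) (hx : IsSolution f x)
    (hj : ∀ n : ℤ, x (t₀ + n + 1) = x (t₀ + n)) (a : ℤ → Bool) :
    IsSolution f (wfglue x t₀ a) := by
  have hy : IsSolution f (fun t => x (t + 1)) := shift_isSolution hper hx
  have hbr : ∀ (b : Bool) (s : ℝ), HasDerivAt (fun u => if b then x (u + 1) else x u)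
      (f (s, if b then x (s + 1) else x s)) s := by
    intro b s
    cases b
    · simpa using hx s
    · simpa using hy s
  intro t
  set n : ℤ := ⌊t - t₀⌋ with hn
  have hfl : (n : ℝ) ≤ t - t₀ := Int.floor_le (t - t₀)
  have hfu : t - t₀ < n + 1 := Int.lt_floor_add_one (t - t₀)
  by_cases hc : t₀ + (n : ℝ) < t
  · -- non-joint point
    have hsub : Set.Ioo (t₀ + (n : ℝ)) (t₀ + n + 1) ∈ 𝓝 t :=
      Ioo_mem_nhds hc (by linarith)
    have hev : wfglue x t₀ a =ᶠ[𝓝 t] (fun s => if a n then x (s + 1) else x s) := by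
      filter_upwards [hsub] with s hs
      have : ⌊s - t₀⌋ = n := by
        rw [Int.floor_eq_iff]
        constructor
        · linarith [hs.1]
        · push_cast; linarith [hs.2]
      simp only [wfglue, this]
    have hd := hbr (a n) t
    have := hd.congr_of_eventuallyEq hev
    have hval : wfglue x t₀ a t = (if a n then x (t + 1) else x t) := by
      simp only [wfglue, ← hn]
    rw [hval]
    exact this
  · -- joint point: t = t₀ + n
    have ht : t = t₀ + n := le_antisymm (not_lt.1 hc) (by linarith)
    have hxt : x (t + 1) = x t := by rw [ht]; exact hj n
    have hval : wfglue x t₀ a t = x t := by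
      simp only [wfglue, ← hn]
      cases hb : a n <;> simp [hxt]
    have hvb : ∀ b : Bool, (if b then x (t + 1) else x t) = x t := by
      intro b; cases b <;> simp [hxt]
    have hL : HasDerivWithinAt (wfglue x t₀ a) (f (t, x t)) (Set.Iic t) t := by
      have base : HasDerivWithinAt (fun u => if a (n - 1) then x (u + 1) else x u)
          (f (t, x t)) (Set.Iic t) t := by
        have := (hbr (a (n - 1)) t).hasDerivWithinAt (s := Set.Iic t)
        rwa [hvb (a (n-1))] at this
      refine base.congr_of_eventuallyEq ?_ ?_
      · have h1 : Set.Ioi (t - 1) ∈ 𝓝[Set.Iic t] t :=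
          mem_nhdsWithin_of_mem_nhds (Ioi_mem_nhds (by linarith))
        have h2 : Set.Iic t ∈ 𝓝[Set.Iic t] t := self_mem_nhdsWithin
        filter_upwards [h1, h2] with s hs1 hs2
        rcases eq_or_lt_of_le (Set.mem_Iic.1 hs2) with he | hlt
        · rw [he, hval, hvb (a (n-1))]
        · have : ⌊s - t₀⌋ = n - 1 := by
            rw [Int.floor_eq_iff]
            rw [ht] at hs1 hlt
            constructor
            · push_cast; simp only [Set.mem_Ioi] at hs1; linarith
            · push_cast; linarith
          simp only [wfglue, this]
      · rw [hval, hvb (a (n-1))]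
    have hR : HasDerivWithinAt (wfglue x t₀ a) (f (t, x t)) (Set.Ici t) t := by
      have base : HasDerivWithinAt (fun u => if a n then x (u + 1) else x u)
          (f (t, x t)) (Set.Ici t) t := by
        have := (hbr (a n) t).hasDerivWithinAt (s := Set.Ici t)
        rwa [hvb (a n)] at this
      refine base.congr_of_eventuallyEq ?_ ?_
      · have h1 : Set.Iio (t + 1) ∈ 𝓝[Set.Ici t] t :=
          mem_nhdsWithin_of_mem_nhds (Iio_mem_nhds (by linarith))
        have h2 : Set.Ici t ∈ 𝓝[Set.Ici t] t := self_mem_nhdsWithin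
        filter_upwards [h1, h2] with s hs1 hs2
        have : ⌊s - t₀⌋ = n := by
          rw [Int.floor_eq_iff]
          rw [ht] at hs1 hs2
          simp only [Set.mem_Iio] at hs1
          simp only [Set.mem_Ici] at hs2
          constructor
          · linarith
          · push_cast; linarith
        simp only [wfglue, this]
      · rw [hval, hvb (a n)]
    have := hL.union hR
    rw [Set.Iic_union_Ici, hasDerivWithinAt_univ] at this
    rwa [hval]

lemma wf_cont_uncurry (hxc : Continuous x)
    (hj : ∀ n : ℤ, x (t₀ + n + 1) = x (t₀ + n)) :
    Continuous (Function.uncurry (wfglue x t₀)) := by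
  rw [continuous_iff_continuousAt]
  rintro ⟨a, t⟩
  set n : ℤ := ⌊t - t₀⌋ with hn
  have hfl : (n : ℝ) ≤ t - t₀ := Int.floor_le (t - t₀)
  have hfu : t - t₀ < n + 1 := Int.lt_floor_add_one (t - t₀)
  by_cases hc : t₀ + (n : ℝ) < t
  · have h1 : {b : ℤ → Bool | b n = a n} ∈ 𝓝 a := by
      have hco : Continuous (fun b : ℤ → Bool => b n) := continuous_apply n
      have : ({a n} : Set Bool) ∈ 𝓝 (a n) := (isOpen_discrete _).mem_nhds rfl
      simpa [Set.preimage, Set.mem_singleton_iff] using hco.continuousAt.preimage_mem_nhds this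
    have h2 : Set.Ioo (t₀ + (n : ℝ)) (t₀ + n + 1) ∈ 𝓝 t := Ioo_mem_nhds hc (by linarith)
    have hev : Function.uncurry (wfglue x t₀) =ᶠ[𝓝 (a, t)]
        (fun p : (ℤ → Bool) × ℝ => if a n then x (p.2 + 1) else x p.2) := by
      rw [nhds_prod_eq]
      filter_upwards [Filter.prod_mem_prod h1 h2] with p hp
      obtain ⟨hp1, hp2⟩ := hp
      have hfloor : ⌊p.2 - t₀⌋ = n := by
        rw [Int.floor_eq_iff]
        constructor
        · linarith [hp2.1]
        · push_cast; linarith [hp2.2]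
      simp only [Function.uncurry, wfglue, hfloor]
      rw [show p.1 n = a n from hp1]
    have hbase : ContinuousAt (fun p : (ℤ → Bool) × ℝ => if a n then x (p.2 + 1) else x p.2)
        (a, t) := by
      cases a n
      · simpa [Function.comp_def] using (hxc.comp continuous_snd).continuousAt
      · simpa [Function.comp_def] using ((hxc.comp (continuous_add_right 1)).comp continuous_snd).continuousAt
    exact hbase.congr hev.symm
  · have ht : t = t₀ + n := le_antisymm (not_lt.1 hc) (by linarith)
    have hxt : x (t + 1) = x t := by rw [ht]; exact hj n
    have hval : Function.uncurry (wfglue x t₀) (a, t) = x t := by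
      simp only [Function.uncurry, wfglue, ← hn]
      cases hb : a n <;> simp [hxt]
    rw [ContinuousAt, Metric.tendsto_nhds]
    intro ε hε
    have h1 : ∀ᶠ s in 𝓝 t, dist (x s) (x t) < ε :=
      Metric.tendsto_nhds.1 hxc.continuousAt ε hε
    have h2 : ∀ᶠ s in 𝓝 t, dist (x (s + 1)) (x t) < ε := by
      have hcy : Tendsto (fun s => x (s + 1)) (𝓝 t) (𝓝 (x (t + 1))) :=
        ((hxc.comp (continuous_add_right 1)).continuousAt :)
      rw [hxt] at hcy
      exact Metric.tendsto_nhds.1 hcy ε hε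
    have h3 := (continuous_snd.tendsto (a, t)).eventually h1
    have h4 := (continuous_snd.tendsto (a, t)).eventually h2
    filter_upwards [h3, h4] with p hp1 hp2
    rw [hval]
    simp only [Function.uncurry, wfglue]
    cases hb : p.1 ⌊p.2 - t₀⌋
    · simpa using hp1
    · simpa using hp2

end ODE


theorem positive_topological_entropy
    (f : ℝ × ℝ → ℝ) (hf : Continuous f)
    (hper : ∀ t x : ℝ, f (t + 1, x) = f (t, x))
    (x : ℝ → ℝ) (hx : IsSolution f x)
    (hx2 : ∀ t : ℝ, x (t + 2) = x t)
    (t₁ : ℝ) (ht₁ : x (t₁ + 1) ≠ x t₁) :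
    ∃ W : Set C(ℝ, ℝ), IsCompact W ∧
      (∀ w ∈ W, IsSolution f w) ∧
      shiftOne '' W = W ∧
      Dynamics.coverEntropy shiftOne W = (Real.log 2 : EReal) := by
  have hxc : Continuous x := hx.continuous
  obtain ⟨t₀, ht₀⟩ := exists_joint hxc hx2 t₁ ht₁
  have hj : ∀ n : ℤ, x (t₀ + n + 1) = x (t₀ + n) := fun n => (periodic_aux hx2 t₀ n).2 ht₀
  have hnz : ∀ m : ℤ, x (t₁ + m + 1) ≠ x (t₁ + m) :=
    fun m h => ht₁ ((periodic_aux hx2 t₁ m).1 h)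
  have hsol : ∀ a : SA, IsSolution f (wfglue x t₀ a) := wf_isSolution hper hx hj
  have hu : Continuous (Function.uncurry (wfglue x t₀)) := wf_cont_uncurry hxc hj
  let φ : SA → C(ℝ, ℝ) := fun a =>
    ⟨wfglue x t₀ a, (hsol a).continuous⟩
  have hφc : Continuous φ := ContinuousMap.continuous_of_continuous_uncurry φ hu
  have hsemi : Function.Semiconj φ Tt shiftOne := by
    intro a
    ext t
    show wfglue x t₀ (Tt a) t = wfglue x t₀ a (t + 1)
    simp only [wfglue, Tt]
    rw [show t + 1 - t₀ = (t - t₀) + 1 by ring, Int.floor_add_one]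
    by_cases hb : a (⌊t - t₀⌋ + 1) = true
    · simp only [hb, Bool.not_true, Bool.false_eq_true, if_false, if_true]
      rw [show t + 1 + 1 = t + 2 by ring, hx2]
    · simp only [Bool.not_eq_true] at hb
      simp [hb]
  have hinj : Function.Injective φ := by
    intro a b hab
    by_contra hne
    obtain ⟨n, hn⟩ : ∃ n, a n ≠ b n := by
      by_contra h; push_neg at h; exact hne (funext h)
    set m : ℤ := n - ⌊t₁ - t₀⌋ with hm
    have hfl : ⌊t₁ + (m:ℝ) - t₀⌋ = n := by
      rw [show t₁ + (m:ℝ) - t₀ = (t₁ - t₀) + (m : ℝ) by ring, Int.floor_add_intCast, hm]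
      ring
    have hne2 : x (t₁ + (m:ℝ) + 1) ≠ x (t₁ + (m:ℝ)) := hnz m
    have hval := ContinuousMap.congr_fun hab (t₁ + (m:ℝ))
    have : wfglue x t₀ a (t₁ + (m:ℝ)) = wfglue x t₀ b (t₁ + (m:ℝ)) := hval
    rw [wfglue, wfglue, hfl] at this
    cases ha : a n <;> cases hb : b n <;> rw [ha, hb] at this <;> simp at this <;>
      first
        | exact hn (ha.trans hb.symm)
        | exact hne2 this
        | exact hne2 this.symm
  have hTsurj : Function.Surjective Tt := fun a =>
    ⟨fun n => !(a (n - 1)), funext fun n => by simp [Tt]⟩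
  refine ⟨φ '' Set.univ, isCompact_univ.image hφc, ?_, ?_, ?_⟩
  · rintro w ⟨a, -, rfl⟩
    exact hsol a
  · rw [Set.image_image]
    have h1 : (fun a => shiftOne (φ a)) = fun a => φ (Tt a) := funext fun a => (hsemi a).symm
    rw [h1, ← Set.image_image (fun a => φ a) Tt, Set.image_univ, Set.range_eq_univ.2 hTsurj]
  · have hcomap : UniformSpace.comap φ (inferInstance : UniformSpace C(ℝ, ℝ)) =
        (inferInstance : UniformSpace SA) := by
      refine unique_uniformity_of_compact ?_ rfl
      rw [UniformSpace.toTopologicalSpace_comap]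
      exact ((hφc.isClosedEmbedding hinj).toIsEmbedding.eq_induced).symm
    have hent := Dynamics.coverEntropy_image_of_comap
      (inferInstance : UniformSpace C(ℝ, ℝ)) hsemi Set.univ
    rw [hcomap] at hent
    rw [hent]
    exact coverEntropy_Tt
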